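/- Let p ≥ 0 and N ≥ 1 be integers and set d = p + 2. Then the real vector space of polynomials P in d variables over ℝ that are homogeneous of degree N and harmonic (i.e. Σ_{i=1}^{d} ∂²P/∂x_i² = 0) has dimension (2N + p) · (N + p − 1)! / (p! · N!). -/

import Mathlib

open MvPolynomial

/-- The Laplacian `Σ_i ∂²/∂x_i²` on polynomials in `d` variables, as a linear map. -/
noncomputable def polyLaplacian (d : ℕ) :
    MvPolynomial (Fin d) ℝ →ₗ[ℝ] MvPolynomial (Fin d) ℝ :=
  ∑ i : Fin d, ((pderiv i).toLinearMap ∘ₗ (pderiv i).toLinearMap)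

/-- The space of polynomials in `d` variables that are homogeneous of degree `N`
and harmonic. -/
noncomputable def harmonicHomogeneous (d N : ℕ) : Submodule ℝ (MvPolynomial (Fin d) ℝ) :=
  MvPolynomial.homogeneousSubmodule (Fin d) ℝ N ⊓ LinearMap.ker (polyLaplacian d)

open Finsupp

section Counting

lemma homog_eq_restrictSupport (d n : ℕ) :
    homogeneousSubmodule (Fin d) ℝ n
      = restrictSupport ℝ {s : Fin d →₀ ℕ | s.degree = n} := by
  ext p
  rw [mem_homogeneousSubmodule, restrictSupport, AddMonoidAlgebra.mem_supported]
  constructor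
  · intro h s hs
    have := h (d := s) (Finsupp.mem_support_iff.mp hs)
    simpa [Finsupp.degree_eq_weight_one, Pi.one_def] using this
  · intro h s hs
    have := h (Finsupp.mem_support_iff.mpr hs)
    simpa [Finsupp.degree_eq_weight_one, Pi.one_def] using this

noncomputable def symEquiv (d n : ℕ) :
    {s : Fin d →₀ ℕ | s.degree = n} ≃ Sym (Fin d) n :=
  Equiv.subtypeEquiv Finsupp.orderIsoMultiset.toEquiv (fun s => by
    change s.degree = n ↔ Multiset.card (Finsupp.toMultiset s) = n
    rw [Finsupp.card_toMultiset]
    simp [Finsupp.degree_apply, Finsupp.sum])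

noncomputable instance (d n : ℕ) : Fintype {s : Fin d →₀ ℕ | s.degree = n} :=
  Fintype.ofEquiv _ (symEquiv d n).symm

lemma card_S (d n : ℕ) :
    Fintype.card {s : Fin d →₀ ℕ | s.degree = n} = (d + n - 1).choose n := by
  rw [Fintype.card_congr (symEquiv d n), Sym.card_sym_eq_choose, Fintype.card_fin]

noncomputable def homogBasis (d n : ℕ) :
    Module.Basis {s : Fin d →₀ ℕ | s.degree = n} ℝ (homogeneousSubmodule (Fin d) ℝ n) :=
  (basisRestrictSupport ℝ _).map (LinearEquiv.ofEq _ _ (homog_eq_restrictSupport d n).symm)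

instance homogFD (d n : ℕ) : FiniteDimensional ℝ (homogeneousSubmodule (Fin d) ℝ n) :=
  Module.Finite.of_basis (homogBasis d n)

lemma finrank_homog (d n : ℕ) :
    Module.finrank ℝ (homogeneousSubmodule (Fin d) ℝ n) = (d + n - 1).choose n := by
  rw [Module.finrank_eq_card_basis (homogBasis d n), card_S]

end Counting

section Pairing

variable {d : ℕ}

noncomputable def wB {d : ℕ} (s : Fin d →₀ ℕ) : ℝ :=
  ∏ i : Fin d, (Nat.factorial (s i) : ℝ)

lemma wB_pos (s : Fin d →₀ ℕ) : 0 < wB s :=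
  Finset.prod_pos fun i _ => by positivity

noncomputable def B {d : ℕ} (p q : MvPolynomial (Fin d) ℝ) : ℝ :=
  ∑ s ∈ p.support, coeff s p * coeff s q * wB s

lemma B_eq_sum {p q : MvPolynomial (Fin d) ℝ} {T : Finset (Fin d →₀ ℕ)}
    (h : p.support ⊆ T) : B p q = ∑ s ∈ T, coeff s p * coeff s q * wB s :=
  Finset.sum_subset h (fun s _ hs => by
    rw [MvPolynomial.notMem_support_iff.mp hs, zero_mul, zero_mul])

lemma B_add_left (p₁ p₂ q : MvPolynomial (Fin d) ℝ) :
    B (p₁ + p₂) q = B p₁ q + B p₂ q := by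
  classical
  rw [B_eq_sum (T := p₁.support ∪ p₂.support ∪ (p₁ + p₂).support) (by intro x; simp; tauto),
    B_eq_sum (T := p₁.support ∪ p₂.support ∪ (p₁ + p₂).support) (by intro x; simp; tauto),
    B_eq_sum (T := p₁.support ∪ p₂.support ∪ (p₁ + p₂).support) (by intro x; simp; tauto),
    ← Finset.sum_add_distrib]
  refine Finset.sum_congr rfl fun s _ => by rw [coeff_add]; ring

lemma B_zero_left (q : MvPolynomial (Fin d) ℝ) : B 0 q = 0 := by
  simp [B]

lemma B_sum_left {ι : Type*} (t : Finset ι) (f : ι → MvPolynomial (Fin d) ℝ)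
    (q : MvPolynomial (Fin d) ℝ) : B (∑ i ∈ t, f i) q = ∑ i ∈ t, B (f i) q := by
  classical
  induction t using Finset.induction_on with
  | empty => simp [B_zero_left]
  | insert a s h ih => rw [Finset.sum_insert h, Finset.sum_insert h, B_add_left, ih]

lemma B_monomial (s : Fin d →₀ ℕ) (a : ℝ) (q : MvPolynomial (Fin d) ℝ) :
    B (monomial s a) q = a * coeff s q * wB s := by
  classical
  rw [B_eq_sum (T := {s}) support_monomial_subset, Finset.sum_singleton, coeff_monomial]
  simp

lemma polyLaplacian_apply (p : MvPolynomial (Fin d) ℝ) :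
    polyLaplacian d p = ∑ i : Fin d, pderiv i (pderiv i p) := by
  simp [polyLaplacian, LinearMap.sum_apply]

noncomputable def R2 (d : ℕ) : MvPolynomial (Fin d) ℝ := ∑ i : Fin d, X i * X i

lemma wB_sub_sub (s : Fin d →₀ ℕ) (i : Fin d) (h : 2 ≤ s i) :
    wB s = ((s i * (s i - 1) : ℕ) : ℝ) * wB (s - single i 1 - single i 1) := by
  classical
  unfold wB
  rw [← Finset.prod_erase_mul _ _ (Finset.mem_univ i),
    ← Finset.prod_erase_mul _ _ (Finset.mem_univ i)]
  have hval : ∀ j : Fin d, j ≠ i → ((s - single i 1 - single i 1 : Fin d →₀ ℕ)) j = s j := by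
    intro j hj
    simp [tsub_apply, single_apply, (Ne.symm hj)]
  have hi : ((s - single i 1 - single i 1 : Fin d →₀ ℕ)) i = s i - 2 := by
    simp [tsub_apply, single_apply]
    omega
  have hprod : (∏ j ∈ Finset.univ.erase i,
        (((s - single i 1 - single i 1 : Fin d →₀ ℕ) j).factorial : ℝ))
      = ∏ j ∈ Finset.univ.erase i, ((s j).factorial : ℝ) :=
    Finset.prod_congr rfl fun j hj => by rw [hval j (Finset.ne_of_mem_erase hj)]
  rw [hprod, hi]
  obtain ⟨m, hm⟩ : ∃ m, s i = m + 2 := ⟨s i - 2, by omega⟩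
  rw [hm]
  have : (m + 2 - 2) = m := by omega
  rw [this]
  have : (m+2).factorial = ((m+2) * (m+1)) * m.factorial := by
    rw [Nat.factorial_succ, Nat.factorial_succ]; ring
  rw [this]
  push_cast
  ring

lemma B_pderiv2_monomial (i : Fin d) (s : Fin d →₀ ℕ) (a : ℝ)
    (q : MvPolynomial (Fin d) ℝ) :
    B (pderiv i (pderiv i (monomial s a))) q
      = a * coeff s (X i * (X i * q)) * wB s := by
  classical
  rw [pderiv_monomial, pderiv_monomial, B_monomial, coeff_X_mul', coeff_X_mul']
  rcases Nat.lt_or_ge (s i) 2 with h | h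
  · have h0 : s i = 0 ∨ s i = 1 := by omega
    rcases h0 with h0 | h0 <;>
      simp [Finsupp.mem_support_iff, tsub_apply, single_apply, h0]
  · have h1 : i ∈ s.support := by
      rw [Finsupp.mem_support_iff]; omega
    have h2 : i ∈ (s - single i 1).support := by
      rw [Finsupp.mem_support_iff]
      simp [tsub_apply, single_apply]
      omega
    rw [if_pos h1, if_pos h2]
    have h3 : ((s - single i 1 : Fin d →₀ ℕ)) i = s i - 1 := by
      simp [tsub_apply, single_apply]
    rw [h3, wB_sub_sub s i h]
    push_cast [Nat.cast_sub (by omega : 1 ≤ s i)]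
    ring

lemma B_adjoint (p q : MvPolynomial (Fin d) ℝ) :
    B (polyLaplacian d p) q = B p (R2 d * q) := by
  induction p using MvPolynomial.induction_on' with
  | monomial s a =>
    rw [polyLaplacian_apply, B_monomial]
    rw [B_sum_left]
    have : R2 d * q = ∑ i : Fin d, X i * (X i * q) := by
      rw [R2, Finset.sum_mul]
      exact Finset.sum_congr rfl fun i _ => by ring
    rw [this, coeff_sum, Finset.mul_sum, Finset.sum_mul]
    exact Finset.sum_congr rfl fun i _ => B_pderiv2_monomial i s a q
  | add p₁ p₂ ih₁ ih₂ =>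
    rw [map_add, B_add_left, B_add_left, ih₁, ih₂]

lemma B_self_pos {p : MvPolynomial (Fin d) ℝ} (h : p ≠ 0) : 0 < B p p := by
  apply Finset.sum_pos
  · intro s hs
    have hc : coeff s p ≠ 0 := MvPolynomial.mem_support_iff.mp hs
    exact mul_pos (mul_self_pos.mpr hc) (wB_pos s)
  · exact Finset.nonempty_iff_ne_empty.mpr fun he => h (MvPolynomial.support_eq_empty.mp he)

lemma R2_ne_zero (hd : 0 < d) : R2 d ≠ 0 := by
  intro h
  have := congrArg (eval fun _ : Fin d => (1 : ℝ)) h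
  simp [R2, eval_sum] at this
  omega

lemma lap_R2_injective (hd : 0 < d) (q : MvPolynomial (Fin d) ℝ)
    (h : polyLaplacian d (R2 d * q) = 0) : q = 0 := by
  by_contra hq
  have hR2q : R2 d * q ≠ 0 := mul_ne_zero (R2_ne_zero hd) hq
  have h2 : B (polyLaplacian d (R2 d * q)) q = B (R2 d * q) (R2 d * q) := B_adjoint _ q
  rw [h, B_zero_left] at h2
  exact absurd h2.symm (ne_of_gt (B_self_pos hR2q))

end Pairing

section Homogeneity

variable {d : ℕ}

lemma degree_sub_single {s : Fin d →₀ ℕ} {i : Fin d} (h : 1 ≤ s i) :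
    (s - single i 1).degree = s.degree - 1 := by
  have hle : single i 1 ≤ s := by
    rw [Finsupp.single_le_iff]; exact h
  have hadd : (s - single i 1) + single i 1 = s := tsub_add_cancel_of_le hle
  have h2 := congrArg Finsupp.degree hadd
  simp only [Finsupp.degree_eq_weight_one, map_add] at h2 ⊢
  have h1 : (Finsupp.weight (fun _ => 1 : Fin d → ℕ)) (single i 1) = 1 := by
    simp [Finsupp.weight_apply]
  omega

lemma pderiv_isHomogeneous {p : MvPolynomial (Fin d) ℝ} {n : ℕ} (i : Fin d)
    (hp : p.IsHomogeneous n) : (pderiv i p).IsHomogeneous (n - 1) := by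
  rw [p.as_sum, map_sum]
  apply MvPolynomial.IsHomogeneous.sum
  intro s hs
  rw [pderiv_monomial]
  rcases Nat.eq_zero_or_pos (s i) with h | h
  · rw [h]
    simp only [Nat.cast_zero, mul_zero, map_zero]
    exact isHomogeneous_zero _ _ _
  · apply isHomogeneous_monomial
    have hdeg : s.degree = n := by
      rw [Finsupp.degree_eq_weight_one]
      exact hp (MvPolynomial.mem_support_iff.mp hs)
    rw [degree_sub_single h, hdeg]

lemma lap_mem {n : ℕ} {q : MvPolynomial (Fin d) ℝ}
    (hq : q ∈ homogeneousSubmodule (Fin d) ℝ n) :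
    polyLaplacian d q ∈ homogeneousSubmodule (Fin d) ℝ (n - 2) := by
  rw [polyLaplacian_apply]
  apply Submodule.sum_mem
  intro i _
  rw [mem_homogeneousSubmodule] at hq ⊢
  have := pderiv_isHomogeneous i (pderiv_isHomogeneous i hq)
  have h2 : n - 1 - 1 = n - 2 := by omega
  rwa [h2] at this

lemma R2_isHomogeneous : (R2 d).IsHomogeneous 2 := by
  apply MvPolynomial.IsHomogeneous.sum
  intro i _
  exact (isHomogeneous_X ℝ i).mul (isHomogeneous_X ℝ i)

lemma mul_R2_mem {n : ℕ} {q : MvPolynomial (Fin d) ℝ}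
    (hq : q ∈ homogeneousSubmodule (Fin d) ℝ n) :
    R2 d * q ∈ homogeneousSubmodule (Fin d) ℝ (n + 2) := by
  rw [mem_homogeneousSubmodule] at hq ⊢
  have := R2_isHomogeneous.mul hq
  rwa [add_comm] at this

lemma isHomogeneous_zero_pderiv {q : MvPolynomial (Fin d) ℝ}
    (hq : q.IsHomogeneous 0) (i : Fin d) : pderiv i q = 0 := by
  rw [q.as_sum, map_sum]
  apply Finset.sum_eq_zero
  intro s hs
  have hs0 : s = 0 := by
    rw [← Finsupp.degree_eq_zero_iff, Finsupp.degree_eq_weight_one]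
    exact hq (MvPolynomial.mem_support_iff.mp hs)
  rw [hs0, pderiv_monomial]
  simp

end Homogeneity

section MainCase

lemma finrank_sum_eq (d N : ℕ) (hd : 0 < d) (hN : 2 ≤ N) :
    Module.finrank ℝ (harmonicHomogeneous d N)
        + Module.finrank ℝ (homogeneousSubmodule (Fin d) ℝ (N - 2))
      = Module.finrank ℝ (homogeneousSubmodule (Fin d) ℝ N) := by
  classical
  set V := homogeneousSubmodule (Fin d) ℝ N
  set W := homogeneousSubmodule (Fin d) ℝ (N - 2)
  have hf : ∀ x ∈ V, polyLaplacian d x ∈ W := fun x hx => lap_mem hx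
  set f : V →ₗ[ℝ] W := (polyLaplacian d).restrict hf with hfdef
  have hg : ∀ x ∈ W, (LinearMap.mulLeft ℝ (R2 d)) x ∈ V := by
    intro x hx
    have := mul_R2_mem hx
    have h2 : N - 2 + 2 = N := by omega
    rwa [h2] at this
  set g : W →ₗ[ℝ] V := (LinearMap.mulLeft ℝ (R2 d)).restrict hg with hgdef
  have hinj : Function.Injective (f ∘ₗ g) := by
    rw [← LinearMap.ker_eq_bot, LinearMap.ker_eq_bot']
    intro x hx
    have hval : polyLaplacian d (R2 d * (x : MvPolynomial (Fin d) ℝ)) = 0 := by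
      have := congrArg Subtype.val hx
      simpa [hfdef, hgdef, LinearMap.restrict_apply, LinearMap.mulLeft_apply] using this
    exact Subtype.ext (lap_R2_injective hd _ hval)
  have hsurj : Function.Surjective f := by
    have := (LinearMap.injective_iff_surjective (f := f ∘ₗ g)).mp hinj
    rw [LinearMap.coe_comp] at this
    exact Function.Surjective.of_comp this
  have hrange : LinearMap.range f = ⊤ := LinearMap.range_eq_top.mpr hsurj
  have hrn := LinearMap.finrank_range_add_finrank_ker f
  rw [hrange, finrank_top] at hrn
  have hker : Module.finrank ℝ (LinearMap.ker f) = Module.finrank ℝ (harmonicHomogeneous d N) := by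
    have hkereq : LinearMap.ker f
        = Submodule.comap V.subtype (harmonicHomogeneous d N) := by
      ext x
      simp only [LinearMap.mem_ker, Submodule.mem_comap, Submodule.coe_subtype,
        harmonicHomogeneous, Submodule.mem_inf, LinearMap.mem_ker]
      constructor
      · intro hx
        refine ⟨x.2, ?_⟩
        have := congrArg Subtype.val hx
        simpa [hfdef, LinearMap.restrict_apply] using this
      · intro hx
        apply Subtype.ext
        simpa [hfdef, LinearMap.restrict_apply] using hx.2
    rw [hkereq]
    exact LinearEquiv.finrank_eq
      (Submodule.comapSubtypeEquivOfLe (inf_le_left : harmonicHomogeneous d N ≤ V))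
  rw [hker] at hrn
  omega

end MainCase

theorem dim_harmonic_homogeneous (p N : ℕ) (hN : 1 ≤ N) :
    Module.finrank ℝ (harmonicHomogeneous (p + 2) N)
      = (2 * N + p) * Nat.factorial (N + p - 1)
          / (Nat.factorial p * Nat.factorial N) := by
  rcases Nat.lt_or_ge N 2 with h2 | h2
  · -- N = 1
    have hN1 : N = 1 := by omega
    subst hN1
    have hsub : harmonicHomogeneous (p + 2) 1 = homogeneousSubmodule (Fin (p + 2)) ℝ 1 := by
      rw [harmonicHomogeneous, inf_eq_left]
      intro q hq
      rw [LinearMap.mem_ker, polyLaplacian_apply]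
      apply Finset.sum_eq_zero
      intro i _
      rw [mem_homogeneousSubmodule] at hq
      have h0 : (pderiv i q).IsHomogeneous 0 := by
        simpa using pderiv_isHomogeneous i hq
      rw [isHomogeneous_zero_pderiv h0 i]
    rw [hsub, finrank_homog]
    have h1 : (p + 2 + 1 - 1).choose 1 = p + 2 := by simp
    rw [h1]
    have h2 : (2 * 1 + p) * Nat.factorial (1 + p - 1) = (p + 2) * Nat.factorial p := by
      have : 1 + p - 1 = p := by omega
      rw [this]; ring
    rw [h2]
    have h3 : Nat.factorial p * Nat.factorial 1 = Nat.factorial p := by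
      simp [Nat.factorial]
    rw [h3, Nat.mul_div_cancel _ (Nat.factorial_pos p)]
  · obtain ⟨M, rfl⟩ : ∃ M, N = M + 2 := ⟨N - 2, by omega⟩
    have key := finrank_sum_eq (p + 2) (M + 2) (by omega) (by omega)
    rw [finrank_homog, finrank_homog] at key
    have e1 : p + 2 + (M + 2) - 1 = M + p + 3 := by omega
    have e2 : M + 2 - 2 = M := by omega
    have e3 : p + 2 + M - 1 = M + p + 1 := by omega
    rw [e1, e2, e3] at key
    -- Pascal: (M+p+3).choose (M+2) = (M+p+1).choose M + ((M+p+2).choose (M+2) + (M+p+1).choose (M+1))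
    have pascal : (M + p + 3).choose (M + 2)
        = (M + p + 1).choose M + ((M + p + 2).choose (M + 2) + (M + p + 1).choose (M + 1)) := by
      have hA : (M + p + 3).choose (M + 2)
          = (M + p + 2).choose (M + 1) + (M + p + 2).choose (M + 2) :=
        Nat.choose_succ_succ' (M + p + 2) (M + 1) ▸ by
          rw [Nat.choose_succ_succ]
      have hB : (M + p + 2).choose (M + 1)
          = (M + p + 1).choose M + (M + p + 1).choose (M + 1) := by
        rw [Nat.choose_succ_succ]
      omega
    have hdim : Module.finrank ℝ (harmonicHomogeneous (p + 2) (M + 2))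
        = (M + p + 2).choose (M + 2) + (M + p + 1).choose (M + 1) := by omega
    rw [hdim]
    -- arithmetic
    have hb : 0 < Nat.factorial p * Nat.factorial (M + 2) :=
      Nat.mul_pos (Nat.factorial_pos _) (Nat.factorial_pos _)
    have harith : (2 * (M + 2) + p) * Nat.factorial (M + 2 + p - 1)
        = ((M + p + 2).choose (M + 2) + (M + p + 1).choose (M + 1))
          * (Nat.factorial p * Nat.factorial (M + 2)) := by
      have e4 : M + 2 + p - 1 = M + p + 1 := by omega
      rw [e4]
      have h1 := Nat.choose_mul_factorial_mul_factorial
        (show M + 2 ≤ M + p + 2 by omega)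
      have e5 : M + p + 2 - (M + 2) = p := by omega
      rw [e5] at h1
      have h2 := Nat.choose_mul_factorial_mul_factorial
        (show M + 1 ≤ M + p + 1 by omega)
      have e6 : M + p + 1 - (M + 1) = p := by omega
      rw [e6] at h2
      have hf2 : Nat.factorial (M + 2) = (M + 2) * Nat.factorial (M + 1) :=
        Nat.factorial_succ (M + 1)
      have hf3 : Nat.factorial (M + p + 2) = (M + p + 2) * Nat.factorial (M + p + 1) :=
        Nat.factorial_succ (M + p + 1)
      calc (2 * (M + 2) + p) * Nat.factorial (M + p + 1)
          = (M + p + 2) * Nat.factorial (M + p + 1)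
            + (M + 2) * Nat.factorial (M + p + 1) := by ring
        _ = Nat.factorial (M + p + 2)
            + (M + 2) * ((M + p + 1).choose (M + 1) * Nat.factorial (M + 1)
                * Nat.factorial p) := by rw [hf3, h2]
        _ = (M + p + 2).choose (M + 2) * Nat.factorial (M + 2) * Nat.factorial p
            + (M + 2) * ((M + p + 1).choose (M + 1) * Nat.factorial (M + 1)
                * Nat.factorial p) := by rw [h1]
        _ = ((M + p + 2).choose (M + 2) + (M + p + 1).choose (M + 1))
              * (Nat.factorial p * Nat.factorial (M + 2)) := by rw [hf2]; ring
    rw [Nat.div_eq_of_eq_mul_left hb harith]
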